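/- Let (Ω, 𝓕, P) be a probability space and let (ε_t)_{t≥1} be an independent family of square-integrable real random variables with E[ε_t] = 0 and Var(ε_t) = σ² for all t. Let c, φ ∈ ℝ with φ ≠ 1, define random variables y_t by y_0 = 0 and y_t = c + φ·y_{t−1} + ε_t for t ≥ 1, and for an integer n ≥ 1 set ȳ_φ = ((1−φ)·Σ_{i=1}^{n−1} y_i + y_n)/n. Then E[(y_{n+1} − E[y_{n+1}])·(ȳ_φ − E[ȳ_φ])] = σ²·φ·(1 − φ^n)/(n·(1 − φ)). -/

import Mathlib

open MeasureTheory ProbabilityTheory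

private lemma integrable_mul_of_memL2 {Ω : Type*} [MeasurableSpace Ω] {P : Measure Ω}
    [IsProbabilityMeasure P] {f g : Ω → ℝ} (hf : MemLp f 2 P) (hg : MemLp g 2 P) :
    Integrable (fun ω => f ω * g ω) P := by
  have h : MemLp (f • g) 1 P := hg.smul hf
  exact h.integrable le_rfl

/-- Equation (A.28): `cov(y_{n+1}, ȳ_φ) = σ² φ (1 - φ^n)/(n (1 - φ))` in the AR(1) model
of Example 1. -/
theorem ar1_pred_summary_covariance {Ω : Type*} [MeasurableSpace Ω] (P : Measure Ω)
    [IsProbabilityMeasure P]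
    (σ : ℝ) (ε : ℕ → Ω → ℝ)
    (hindep : iIndepFun (fun t : ℕ => ε (t + 1)) P)
    (hεL2 : ∀ t : ℕ, 1 ≤ t → MemLp (ε t) 2 P)
    (hεmean : ∀ t : ℕ, 1 ≤ t → ∫ ω, ε t ω ∂P = 0)
    (hεvar : ∀ t : ℕ, 1 ≤ t → variance (ε t) P = σ ^ 2)
    (c φ : ℝ) (hφ : φ ≠ 1)
    (y : ℕ → Ω → ℝ)
    (h0 : ∀ ω, y 0 ω = 0)
    (hrec : ∀ t : ℕ, 1 ≤ t → ∀ ω, y t ω = c + φ * y (t - 1) ω + ε t ω)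
    (n : ℕ) (hn : 1 ≤ n)
    (ybar : Ω → ℝ)
    (hybar : ∀ ω, ybar ω = ((1 - φ) * ∑ i ∈ Finset.Icc 1 (n - 1), y i ω + y n ω) / n) :
    ∫ ω, (y (n + 1) ω - ∫ ω', y (n + 1) ω' ∂P) * (ybar ω - ∫ ω', ybar ω' ∂P) ∂P
      = σ ^ 2 * φ * (1 - φ ^ n) / (n * (1 - φ)) := by
  classical
  obtain ⟨k, rfl⟩ : ∃ k, n = k + 1 := ⟨n - 1, by omega⟩
  have hk1 : k + 1 - 1 = k := by omega
  have h1φ : (1 : ℝ) - φ ≠ 0 := sub_ne_zero.mpr (Ne.symm hφ)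
  have hN : ((k : ℝ) + 1) ≠ 0 := by positivity
  set S : ℕ → Ω → ℝ := fun t ω => ∑ s ∈ Finset.Icc 1 t, φ ^ (t - s) * ε s ω with hSdef
  have hSrec : ∀ t ω, S (t + 1) ω = φ * S t ω + ε (t + 1) ω := by
    intro t ω
    simp only [hSdef]
    rw [Finset.sum_Icc_succ_top (by omega : 1 ≤ t + 1), Nat.sub_self, pow_zero, one_mul,
      Finset.mul_sum]
    congr 1
    refine Finset.sum_congr rfl fun s hs => ?_
    have hs' : s ≤ t := (Finset.mem_Icc.mp hs).2
    rw [show t + 1 - s = (t - s) + 1 by omega, pow_succ]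
    ring
  -- decomposition y t = m t + S t
  have hydec : ∀ t : ℕ, ∃ m : ℝ, ∀ ω, y t ω = m + S t ω := by
    intro t
    induction t with
    | zero => exact ⟨0, fun ω => by simp [h0 ω, hSdef]⟩
    | succ t ih =>
      obtain ⟨m, hm⟩ := ih
      refine ⟨c + φ * m, fun ω => ?_⟩
      rw [hrec (t + 1) (by omega) ω]
      simp only [Nat.add_sub_cancel]
      rw [hm ω, hSrec t ω]; ring
  choose m hm using hydec
  -- integrability facts
  have hεint : ∀ s : ℕ, 1 ≤ s → Integrable (ε s) P :=
    fun s hs => (hεL2 s hs).integrable one_le_two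
  have hSint : ∀ t : ℕ, Integrable (S t) P := by
    intro t
    simp only [hSdef]
    apply integrable_finset_sum
    intro s hs
    exact (hεint s (Finset.mem_Icc.mp hs).1).const_mul _
  have hSmean : ∀ t : ℕ, ∫ ω, S t ω ∂P = 0 := by
    intro t
    simp only [hSdef]
    rw [integral_finset_sum _ fun s hs => (hεint s (Finset.mem_Icc.mp hs).1).const_mul _]
    refine Finset.sum_eq_zero fun s hs => ?_
    rw [integral_const_mul, hεmean s (Finset.mem_Icc.mp hs).1, mul_zero]
  have hymean : ∀ t : ℕ, ∫ ω, y t ω ∂P = m t := by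
    intro t
    calc ∫ ω, y t ω ∂P = ∫ ω, (m t + S t ω) ∂P := by
          refine integral_congr_ae (Filter.Eventually.of_forall fun ω => hm t ω)
      _ = m t := by
          rw [integral_add (integrable_const _) (hSint t), integral_const, hSmean t]
          simp
  -- key summation identity
  have hB : ∀ j : ℕ, ∀ ω, (1 - φ) * ∑ i ∈ Finset.Icc 1 j, S i ω + S (j + 1) ω
      = ∑ s ∈ Finset.Icc 1 (j + 1), ε s ω := by
    intro j
    induction j with
    | zero =>
      intro ω
      simp [hSdef]
    | succ j ih =>
      intro ω
      rw [Finset.sum_Icc_succ_top (by omega : 1 ≤ j + 1),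
        Finset.sum_Icc_succ_top (by omega : 1 ≤ j + 2), ← ih ω, hSrec (j + 1) ω]
      ring
  -- ybar decomposition
  have hybar' : ∀ ω, ybar ω
      = ((1 - φ) * ∑ i ∈ Finset.Icc 1 k, m i + m (k + 1)) / ((k : ℝ) + 1)
        + (∑ s ∈ Finset.Icc 1 (k + 1), ε s ω) / ((k : ℝ) + 1) := by
    intro ω
    rw [hybar ω, hk1]
    have h1 : ∑ i ∈ Finset.Icc 1 k, y i ω
        = ∑ i ∈ Finset.Icc 1 k, m i + ∑ i ∈ Finset.Icc 1 k, S i ω := by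
      rw [← Finset.sum_add_distrib]
      exact Finset.sum_congr rfl fun i _ => hm i ω
    rw [h1, hm (k + 1) ω]
    have h2 := hB k ω
    push_cast
    field_simp
    linarith [h2]
  have hybar_mean : ∫ ω, ybar ω ∂P
      = ((1 - φ) * ∑ i ∈ Finset.Icc 1 k, m i + m (k + 1)) / ((k : ℝ) + 1) := by
    calc ∫ ω, ybar ω ∂P
        = ∫ ω, (((1 - φ) * ∑ i ∈ Finset.Icc 1 k, m i + m (k + 1)) / ((k : ℝ) + 1)
            + (∑ s ∈ Finset.Icc 1 (k + 1), ε s ω) / ((k : ℝ) + 1)) ∂P :=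
          integral_congr_ae (Filter.Eventually.of_forall hybar')
      _ = _ := by
          rw [integral_add (integrable_const _)
            (((integrable_finset_sum _ fun s hs =>
              hεint s (Finset.mem_Icc.mp hs).1)).div_const _), integral_const]
          simp only [measure_univ, ENNReal.toReal_one, one_smul, integral_div]
          rw [integral_finset_sum _ fun s hs => hεint s (Finset.mem_Icc.mp hs).1]
          rw [Finset.sum_congr rfl fun s hs => hεmean s (Finset.mem_Icc.mp hs).1]
          simp
  -- centered forms
  have hcy : ∀ ω, y (k + 1 + 1) ω - ∫ ω', y (k + 1 + 1) ω' ∂P = S (k + 2) ω := by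
    intro ω
    rw [hymean, hm (k + 1 + 1) ω]
    ring_nf
  have hcybar : ∀ ω, ybar ω - ∫ ω', ybar ω' ∂P
      = (∑ s ∈ Finset.Icc 1 (k + 1), ε s ω) / ((k : ℝ) + 1) := by
    intro ω
    rw [hybar_mean, hybar' ω]
    ring
  -- expectation of products of innovations
  have hprod : ∀ t s : ℕ, 1 ≤ t → 1 ≤ s →
      ∫ ω, ε t ω * ε s ω ∂P = if t = s then σ ^ 2 else 0 := by
    intro t s ht hs
    by_cases hts : t = s
    · subst hts
      rw [if_pos rfl]
      have hv := variance_eq_sub (hεL2 t ht)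
      rw [hεvar t ht, hεmean t ht] at hv
      have : ∫ ω, ε t ω * ε t ω ∂P = ∫ ω, ε t ω ^ 2 ∂P := by
        refine integral_congr_ae (Filter.Eventually.of_forall fun ω => by ring)
      rw [this]
      simp only [Pi.pow_apply] at hv
      linarith [hv]
    · simp only [if_neg hts]
      have hij : t - 1 ≠ s - 1 := by omega
      have hind : IndepFun (ε t) (ε s) P := by
        have h := hindep.indepFun hij
        beta_reduce at h
        rwa [show t - 1 + 1 = t by omega, show s - 1 + 1 = s by omega] at h
      have h2 : ∫ ω, ε t ω * ε s ω ∂P = (∫ ω, ε t ω ∂P) * ∫ ω, ε s ω ∂P :=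
        hind.integral_mul_eq_mul_integral (hεL2 t ht).aestronglyMeasurable
          (hεL2 s hs).aestronglyMeasurable
      rw [h2, hεmean t ht, zero_mul]
  -- pointwise expansion of the product
  have key : ∀ ω, (y (k + 1 + 1) ω - ∫ ω', y (k + 1 + 1) ω' ∂P)
      * (ybar ω - ∫ ω', ybar ω' ∂P)
      = ∑ t ∈ Finset.Icc 1 (k + 2), ∑ s ∈ Finset.Icc 1 (k + 1),
          (φ ^ (k + 2 - t) / ((k : ℝ) + 1)) * (ε t ω * ε s ω) := by
    intro ω
    rw [hcy ω, hcybar ω]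
    simp only [hSdef]
    rw [Finset.sum_mul]
    refine Finset.sum_congr rfl fun t _ => ?_
    rw [Finset.sum_div, Finset.mul_sum]
    exact Finset.sum_congr rfl fun s _ => by ring
  have hintpair : ∀ t s : ℕ, t ∈ Finset.Icc 1 (k + 2) → s ∈ Finset.Icc 1 (k + 1) →
      Integrable (fun ω => (φ ^ (k + 2 - t) / ((k : ℝ) + 1)) * (ε t ω * ε s ω)) P := by
    intro t s ht hs
    exact (integrable_mul_of_memL2 (hεL2 t (Finset.mem_Icc.mp ht).1)
      (hεL2 s (Finset.mem_Icc.mp hs).1)).const_mul _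
  calc ∫ ω, (y (k + 1 + 1) ω - ∫ ω', y (k + 1 + 1) ω' ∂P)
        * (ybar ω - ∫ ω', ybar ω' ∂P) ∂P
      = ∫ ω, ∑ t ∈ Finset.Icc 1 (k + 2), ∑ s ∈ Finset.Icc 1 (k + 1),
          (φ ^ (k + 2 - t) / ((k : ℝ) + 1)) * (ε t ω * ε s ω) ∂P :=
        integral_congr_ae (Filter.Eventually.of_forall key)
    _ = ∑ t ∈ Finset.Icc 1 (k + 2), ∑ s ∈ Finset.Icc 1 (k + 1),
          (φ ^ (k + 2 - t) / ((k : ℝ) + 1)) * ∫ ω, ε t ω * ε s ω ∂P := by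
        rw [integral_finset_sum _ fun t ht =>
          integrable_finset_sum _ fun s hs => hintpair t s ht hs]
        refine Finset.sum_congr rfl fun t ht => ?_
        rw [integral_finset_sum _ fun s hs => hintpair t s ht hs]
        exact Finset.sum_congr rfl fun s hs => integral_const_mul _ _
    _ = ∑ t ∈ Finset.Icc 1 (k + 2), ∑ s ∈ Finset.Icc 1 (k + 1),
          if t = s then (φ ^ (k + 2 - t) / ((k : ℝ) + 1)) * σ ^ 2 else 0 := by
        refine Finset.sum_congr rfl fun t ht => Finset.sum_congr rfl fun s hs => ?_
        rw [hprod t s (Finset.mem_Icc.mp ht).1 (Finset.mem_Icc.mp hs).1]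
        split <;> simp
    _ = ∑ t ∈ Finset.Icc 1 (k + 1), (φ ^ (k + 2 - t) / ((k : ℝ) + 1)) * σ ^ 2 := by
        rw [Finset.sum_comm]
        refine Finset.sum_congr rfl fun s hs => ?_
        rw [Finset.sum_ite_eq' (Finset.Icc 1 (k + 2)) s
          (fun t => (φ ^ (k + 2 - t) / ((k : ℝ) + 1)) * σ ^ 2)]
        have hmem : s ∈ Finset.Icc 1 (k + 2) := by
          rw [Finset.mem_Icc] at hs ⊢; omega
        rw [if_pos hmem]
    _ = σ ^ 2 * φ * (1 - φ ^ (k + 1)) / ((((k : ℕ) + 1 : ℕ) : ℝ) * (1 - φ)) := by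
        have hgeom : ∀ j : ℕ, ∑ t ∈ Finset.Icc 1 (j + 1), φ ^ (j + 1 - t)
            = ∑ i ∈ Finset.range (j + 1), φ ^ i := by
          intro j
          induction j with
          | zero => simp
          | succ j ih =>
            rw [Finset.sum_Icc_succ_top (by omega : (1:ℕ) ≤ j + 2), Nat.sub_self, pow_zero,
              geom_sum_succ]
            have hstep : ∑ t ∈ Finset.Icc 1 (j + 1), φ ^ (j + 2 - t)
                = φ * ∑ t ∈ Finset.Icc 1 (j + 1), φ ^ (j + 1 - t) := by
              rw [Finset.mul_sum]
              refine Finset.sum_congr rfl fun t ht => ?_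
              have ht' : t ≤ j + 1 := (Finset.mem_Icc.mp ht).2
              rw [show j + 2 - t = (j + 1 - t) + 1 by omega, pow_succ]; ring
            rw [hstep, ih]
        have h1 : ∑ t ∈ Finset.Icc 1 (k + 1), (φ ^ (k + 2 - t) / ((k : ℝ) + 1)) * σ ^ 2
            = (σ ^ 2 / ((k : ℝ) + 1)) * (φ * ∑ t ∈ Finset.Icc 1 (k + 1), φ ^ (k + 1 - t)) := by
          rw [Finset.mul_sum, Finset.mul_sum]
          refine Finset.sum_congr rfl fun t ht => ?_
          have ht' : t ≤ k + 1 := (Finset.mem_Icc.mp ht).2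
          rw [show k + 2 - t = (k + 1 - t) + 1 by omega, pow_succ]; ring
        rw [h1, hgeom k, geom_sum_eq hφ]
        have hφ1 : φ - 1 ≠ 0 := sub_ne_zero.mpr hφ
        push_cast
        field_simp
        ring
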